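/- Let Q₀, Q₁ ⊆ (-∞,0)^n be nonempty convex sets with Q_j + (-∞,0]^n ⊆ Q_j, whose copolars Q_j° = {x ∈ [0,∞)^n : ⟨x,y⟩ ≤ -1 ∀y ∈ Q_j} have finite covolume Covol(Q_j°) = Vol([0,∞)^n \ Q_j°). Then for t ∈ (0,1) and Q_t = (1-t)Q₀ + tQ₁ (Minkowski combination), Covol(Q_t°) ≤ Covol(Q₀°)^{1-t} · Covol(Q₁°)^t. -/

import Mathlib

open MeasureTheory Set

noncomputable section

/-- The open negative orthant `(-∞,0)^n`. -/
def negOrth (n : ℕ) : Set (Fin n → ℝ) := {y | ∀ i, y i < 0}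

/-- The nonnegative orthant `[0,∞)^n`. -/
def nonnegOrth (n : ℕ) : Set (Fin n → ℝ) := {x | ∀ i, 0 ≤ x i}

/-- The nonpositive orthant `(-∞,0]^n`. -/
def nonposOrth (n : ℕ) : Set (Fin n → ℝ) := {v | ∀ i, v i ≤ 0}

/-- The Euclidean pairing `⟨x,y⟩ = ∑ i, x i * y i`. -/
def pairing {n : ℕ} (x y : Fin n → ℝ) : ℝ := ∑ i, x i * y i

/-- Support function `h_Q(x) = sup_{y ∈ Q} ⟨x,y⟩`. -/
def supp {n : ℕ} (Q : Set (Fin n → ℝ)) (x : Fin n → ℝ) : ℝ :=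
  sSup ((fun y => pairing x y) '' Q)

/-- Copolar `Q° = {x ∈ [0,∞)^n : ⟨x,y⟩ ≤ -1 ∀ y ∈ Q}`. -/
def copolar {n : ℕ} (Q : Set (Fin n → ℝ)) : Set (Fin n → ℝ) :=
  {x ∈ nonnegOrth n | ∀ y ∈ Q, pairing x y ≤ -1}

/-- Minkowski combination `(1-t)Q₀ + tQ₁`. -/
def minkComb {n : ℕ} (t : ℝ) (Q₀ Q₁ : Set (Fin n → ℝ)) : Set (Fin n → ℝ) :=
  {z | ∃ a ∈ Q₀, ∃ b ∈ Q₁, z = (1 - t) • a + t • b}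

namespace CovolAux

open scoped Pointwise ENNReal NNReal

variable {n : ℕ}

lemma pairing_nonpos {x y : Fin n → ℝ} (hx : x ∈ nonnegOrth n) (hy : y ∈ negOrth n) :
    pairing x y ≤ 0 :=
  Finset.sum_nonpos fun i _ => mul_nonpos_iff.2 (Or.inl ⟨hx i, (hy i).le⟩)

lemma bddAbove_pairs {Q : Set (Fin n → ℝ)} (hQ : Q ⊆ negOrth n) {x : Fin n → ℝ}
    (hx : x ∈ nonnegOrth n) : BddAbove ((fun y => pairing x y) '' Q) := by
  refine ⟨0, ?_⟩
  rintro z ⟨y, hy, rfl⟩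
  exact pairing_nonpos hx (hQ hy)

lemma supp_le_iff {Q : Set (Fin n → ℝ)} (hQ : Q ⊆ negOrth n) (hne : Q.Nonempty)
    {x : Fin n → ℝ} (hx : x ∈ nonnegOrth n) {c : ℝ} :
    supp Q x ≤ c ↔ ∀ y ∈ Q, pairing x y ≤ c := by
  constructor
  · intro h y hy
    exact (le_csSup (bddAbove_pairs hQ hx) (mem_image_of_mem _ hy)).trans h
  · intro h
    refine csSup_le (hne.image _) ?_
    rintro z ⟨y, hy, rfl⟩
    exact h y hy

lemma supp_nonpos {Q : Set (Fin n → ℝ)} (hQ : Q ⊆ negOrth n) (hne : Q.Nonempty)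
    {x : Fin n → ℝ} (hx : x ∈ nonnegOrth n) : supp Q x ≤ 0 :=
  (supp_le_iff hQ hne hx).2 fun y hy => pairing_nonpos hx (hQ hy)

lemma diff_copolar {Q : Set (Fin n → ℝ)} (hQ : Q ⊆ negOrth n) (hne : Q.Nonempty) :
    nonnegOrth n \ copolar Q = {x | x ∈ nonnegOrth n ∧ -1 < supp Q x} := by
  ext x
  constructor
  · rintro ⟨hxO, hxc⟩
    refine ⟨hxO, ?_⟩
    by_contra h
    push_neg at h
    exact hxc ⟨hxO, (supp_le_iff hQ hne hxO).1 h⟩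
  · rintro ⟨hxO, h⟩
    refine ⟨hxO, fun hc => ?_⟩
    exact absurd ((supp_le_iff hQ hne hxO).2 hc.2) (not_le.2 h)

lemma pairing_smul {r : ℝ} (x y : Fin n → ℝ) : pairing (r • x) y = r * pairing x y := by
  simp only [pairing, Pi.smul_apply, smul_eq_mul, Finset.mul_sum]
  exact Finset.sum_congr rfl fun i _ => by ring

lemma pairing_comb {c d : ℝ} (x a b : Fin n → ℝ) :
    pairing x (c • a + d • b) = c * pairing x a + d * pairing x b := by
  simp only [pairing, Pi.add_apply, Pi.smul_apply, smul_eq_mul, Finset.mul_sum,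
    ← Finset.sum_add_distrib]
  exact Finset.sum_congr rfl fun i _ => by ring

lemma supp_smul {Q : Set (Fin n → ℝ)} {x : Fin n → ℝ} {r : ℝ} (hr : 0 ≤ r) :
    supp Q (r • x) = r * supp Q x := by
  unfold supp
  have h1 : (fun y => pairing (r • x) y) '' Q = r • ((fun y => pairing x y) '' Q) := by
    rw [← Set.image_smul, Set.image_image]
    exact Set.image_congr fun y _ => pairing_smul x y
  rw [h1, Real.sSup_smul_of_nonneg hr, smul_eq_mul]

lemma mem_nonnegOrth_smul {x : Fin n → ℝ} {r : ℝ} (hr : 0 < r) (hx : x ∈ nonnegOrth n) :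
    r • x ∈ nonnegOrth n := fun i => mul_nonneg hr.le (hx i)

lemma scale_set {Q : Set (Fin n → ℝ)} {r : ℝ} (hr : 0 < r) :
    {x | x ∈ nonnegOrth n ∧ -r < supp Q x} = r • {x | x ∈ nonnegOrth n ∧ -1 < supp Q x} := by
  ext x
  rw [Set.mem_smul_set_iff_inv_smul_mem₀ hr.ne']
  constructor
  · rintro ⟨hxO, hs⟩
    refine ⟨mem_nonnegOrth_smul (inv_pos.2 hr) hxO, ?_⟩
    rw [supp_smul (inv_nonneg.2 hr.le)]
    rw [inv_mul_eq_div, lt_div_iff₀ hr]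
    linarith
  · rintro ⟨hxO', hs⟩
    have hxO : x ∈ nonnegOrth n := by
      intro i
      have h := hxO' i
      simp only [Pi.smul_apply, smul_eq_mul] at h
      have h2 : 0 ≤ r * (r⁻¹ * x i) := mul_nonneg hr.le h
      rwa [← mul_assoc, mul_inv_cancel₀ hr.ne', one_mul] at h2
    refine ⟨hxO, ?_⟩
    rw [supp_smul (inv_nonneg.2 hr.le), inv_mul_eq_div, lt_div_iff₀ hr] at hs
    linarith

lemma continuous_pairing (y : Fin n → ℝ) : Continuous fun x : Fin n → ℝ => pairing x y :=
  continuous_finset_sum _ fun i _ => (continuous_apply i).mul continuous_const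

lemma isClosed_nonnegOrth : IsClosed (nonnegOrth n) := by
  have : nonnegOrth n = ⋂ i, {x : Fin n → ℝ | 0 ≤ x i} := by
    ext x; simp [nonnegOrth]
  rw [this]
  exact isClosed_iInter fun i => isClosed_le continuous_const (continuous_apply i)

lemma isClosed_sublevel {Q : Set (Fin n → ℝ)} (hQ : Q ⊆ negOrth n) (hne : Q.Nonempty) (c : ℝ) :
    IsClosed {x | x ∈ nonnegOrth n ∧ supp Q x ≤ c} := by
  have h1 : {x | x ∈ nonnegOrth n ∧ supp Q x ≤ c}
      = nonnegOrth n ∩ ⋂ y ∈ Q, {x | pairing x y ≤ c} := by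
    ext x
    simp only [mem_inter_iff, mem_iInter, mem_setOf_eq]
    exact and_congr_right fun hx => supp_le_iff hQ hne hx
  rw [h1]
  exact isClosed_nonnegOrth.inter <| isClosed_biInter fun y _ =>
    isClosed_le (continuous_pairing y) continuous_const

lemma measurableSet_strict {Q : Set (Fin n → ℝ)} (hQ : Q ⊆ negOrth n) (hne : Q.Nonempty) (c : ℝ) :
    MeasurableSet {x | x ∈ nonnegOrth n ∧ c < supp Q x} := by
  have h1 : {x | x ∈ nonnegOrth n ∧ c < supp Q x} =
      nonnegOrth n \ {x | x ∈ nonnegOrth n ∧ supp Q x ≤ c} := by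
    ext x
    constructor
    · rintro ⟨h1, h2⟩; exact ⟨h1, fun h => absurd h.2 (not_le.2 h2)⟩
    · rintro ⟨h1, h2⟩; exact ⟨h1, not_le.1 fun hc => h2 ⟨h1, hc⟩⟩
  rw [h1]
  exact isClosed_nonnegOrth.measurableSet.diff (isClosed_sublevel hQ hne c).measurableSet

open Classical in
/-- The integrand `e^{h_Q}` cut off to the nonnegative orthant. -/
def gQ (Q : Set (Fin n → ℝ)) : (Fin n → ℝ) → ℝ :=
  fun x => if x ∈ nonnegOrth n then Real.exp (supp Q x) else 0

lemma gQ_nonneg (Q : Set (Fin n → ℝ)) (x : Fin n → ℝ) : 0 ≤ gQ Q x := by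
  unfold gQ; split
  · exact (Real.exp_pos _).le
  · exact le_refl _

lemma gQ_le_one {Q : Set (Fin n → ℝ)} (hQ : Q ⊆ negOrth n) (hne : Q.Nonempty) (x : Fin n → ℝ) :
    gQ Q x ≤ 1 := by
  unfold gQ; split
  · next hx => exact Real.exp_le_one_iff.2 (supp_nonpos hQ hne hx)
  · exact zero_le_one

lemma measurable_gQ {Q : Set (Fin n → ℝ)} (hQ : Q ⊆ negOrth n) (hne : Q.Nonempty) :
    Measurable (gQ Q) := by
  apply measurable_of_Ioi
  intro a
  rcases lt_trichotomy a 0 with ha | rfl | ha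
  · have : gQ Q ⁻¹' Ioi a = univ :=
      eq_univ_of_forall fun x => lt_of_lt_of_le ha (gQ_nonneg Q x)
    rw [this]; exact MeasurableSet.univ
  · have : gQ Q ⁻¹' Ioi 0 = nonnegOrth n := by
      ext x
      simp only [mem_preimage, mem_Ioi, gQ]
      split
      · next hx => simp [hx, Real.exp_pos]
      · next hx => simp [hx]
    rw [this]; exact isClosed_nonnegOrth.measurableSet
  · have : gQ Q ⁻¹' Ioi a = {x | x ∈ nonnegOrth n ∧ Real.log a < supp Q x} := by
      ext x
      simp only [mem_preimage, mem_Ioi, gQ, mem_setOf_eq]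
      split
      · next hx =>
        rw [← Real.log_lt_iff_lt_exp ha]
        exact ⟨fun h => ⟨hx, h⟩, fun h => h.2⟩
      · next hx =>
        constructor
        · intro h; exact absurd (lt_trans ha h) (lt_irrefl 0)
        · rintro ⟨hx', _⟩; exact absurd hx' hx
    rw [this]; exact measurableSet_strict hQ hne _

/-- The universal constant `c₀ = ∫₀¹ (-log s)^n ds` (equal to `n!`). -/
def c0 (n : ℕ) : ℝ≥0∞ := ∫⁻ s in Ioo (0:ℝ) 1, ENNReal.ofReal ((-Real.log s) ^ n)

lemma measurable_logpow : Measurable fun s : ℝ => ENNReal.ofReal ((-Real.log s) ^ n) :=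
  ((Real.measurable_log.neg).pow_const n).ennreal_ofReal

lemma c0_pos : 0 < c0 n := by
  have sub : Ioo (0:ℝ) (Real.exp (-1)) ⊆ Ioo 0 1 :=
    Ioo_subset_Ioo le_rfl (Real.exp_le_one_iff.2 (by norm_num))
  have hle : ∀ s ∈ Ioo (0:ℝ) (Real.exp (-1)), (1:ℝ≥0∞) ≤ ENNReal.ofReal ((-Real.log s) ^ n) := by
    intro s hs
    have hlog : Real.log s < -1 := (Real.log_lt_iff_lt_exp hs.1).2 hs.2
    have h1 : (1:ℝ) ≤ (-Real.log s) ^ n := one_le_pow₀ (by linarith)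
    calc (1:ℝ≥0∞) = ENNReal.ofReal 1 := by simp
      _ ≤ _ := ENNReal.ofReal_le_ofReal h1
  calc (0:ℝ≥0∞) < volume (Ioo (0:ℝ) (Real.exp (-1))) := by
        rw [Real.volume_Ioo]
        simp [ENNReal.ofReal_pos, Real.exp_pos]
    _ = ∫⁻ _ in Ioo (0:ℝ) (Real.exp (-1)), (1:ℝ≥0∞) := (setLIntegral_one _).symm
    _ ≤ ∫⁻ s in Ioo (0:ℝ) (Real.exp (-1)), ENNReal.ofReal ((-Real.log s) ^ n) :=
        setLIntegral_mono measurable_logpow hle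
    _ ≤ c0 n := lintegral_mono_set sub

lemma neg_log_le {s : ℝ} (hs : s ∈ Ioo (0:ℝ) 1) :
    -Real.log s ≤ ((n:ℝ) + 1) * s ^ (-(1 / ((n:ℝ) + 1))) := by
  have hm : (0:ℝ) < (n:ℝ) + 1 := by positivity
  have h1 : Real.log (s ^ (-(1 / ((n:ℝ) + 1)))) = -(1 / ((n:ℝ) + 1)) * Real.log s :=
    Real.log_rpow hs.1 _
  have h2 : Real.log (s ^ (-(1 / ((n:ℝ) + 1)))) ≤ s ^ (-(1 / ((n:ℝ) + 1))) := by
    have := Real.log_le_sub_one_of_pos (Real.rpow_pos_of_pos hs.1 (-(1 / ((n:ℝ) + 1))))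
    linarith
  have h3 : -(1 / ((n:ℝ) + 1)) * Real.log s ≤ s ^ (-(1 / ((n:ℝ) + 1))) := by
    rw [← h1]; exact h2
  have h4 := mul_le_mul_of_nonneg_left h3 hm.le
  calc -Real.log s = ((n:ℝ) + 1) * (-(1 / ((n:ℝ) + 1)) * Real.log s) := by
        field_simp
    _ ≤ ((n:ℝ) + 1) * s ^ (-(1 / ((n:ℝ) + 1))) := h4

lemma c0_lt_top : c0 n < ⊤ := by
  set ρ : ℝ := -((n:ℝ) / ((n:ℝ) + 1)) with hρdef
  have hρ : -1 < ρ := by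
    rw [hρdef, neg_lt_neg_iff]
    rw [div_lt_one (by positivity)]
    linarith
  have hint : IntegrableOn (fun s : ℝ => ((n:ℝ) + 1) ^ n * s ^ ρ) (Ioo 0 1) := by
    have h1 : IntervalIntegrable (fun s : ℝ => s ^ ρ) volume 0 1 := intervalIntegral.intervalIntegrable_rpow' hρ
    rw [intervalIntegrable_iff, uIoc_of_le zero_le_one] at h1
    exact (h1.mono_set Ioo_subset_Ioc_self).const_mul _
  have hbound : ∀ s ∈ Ioo (0:ℝ) 1,
      ENNReal.ofReal ((-Real.log s) ^ n) ≤ ENNReal.ofReal (((n:ℝ) + 1) ^ n * s ^ ρ) := by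
    intro s hs
    apply ENNReal.ofReal_le_ofReal
    have hlog : (0:ℝ) ≤ -Real.log s := by
      have := Real.log_nonpos hs.1.le hs.2.le; linarith
    calc (-Real.log s) ^ n ≤ (((n:ℝ) + 1) * s ^ (-(1 / ((n:ℝ) + 1)))) ^ n :=
          pow_le_pow_left₀ hlog (neg_log_le hs) n
      _ = ((n:ℝ) + 1) ^ n * (s ^ (-(1 / ((n:ℝ) + 1)))) ^ n := mul_pow _ _ n
      _ = ((n:ℝ) + 1) ^ n * s ^ ρ := by
          rw [← Real.rpow_natCast (s ^ (-(1 / ((n:ℝ) + 1)))) n, ← Real.rpow_mul hs.1.le]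
          congr 1
          rw [hρdef]
          field_simp
  have hmeas : Measurable fun s : ℝ => ENNReal.ofReal (((n:ℝ) + 1) ^ n * s ^ ρ) :=
    ((measurable_const.mul (measurable_id'.pow_const ρ)).ennreal_ofReal)
  calc c0 n ≤ ∫⁻ s in Ioo (0:ℝ) 1, ENNReal.ofReal (((n:ℝ) + 1) ^ n * s ^ ρ) :=
        setLIntegral_mono hmeas hbound
    _ < ⊤ := by
        have hnn : 0 ≤ᵐ[volume.restrict (Ioo (0:ℝ) 1)] fun s : ℝ => ((n:ℝ) + 1) ^ n * s ^ ρ := by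
          refine (ae_restrict_iff' measurableSet_Ioo).2 (ae_of_all _ fun s hs => ?_)
          have := Real.rpow_nonneg hs.1.le ρ
          positivity
        exact (hasFiniteIntegral_iff_ofReal hnn).1 hint.hasFiniteIntegral

/-- The key identity: `∫ e^{h_Q} = c₀ · Covol(Q°)`. -/
lemma key {Q : Set (Fin n → ℝ)} (hQ : Q ⊆ negOrth n) (hne : Q.Nonempty) :
    ∫⁻ x, ENNReal.ofReal (gQ Q x) = c0 n * volume (nonnegOrth n \ copolar Q) := by
  rw [lintegral_eq_lintegral_meas_lt volume (ae_of_all _ fun x => gQ_nonneg Q x)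
    (measurable_gQ hQ hne).aemeasurable]
  rw [← Ioo_union_Ici_eq_Ioi (zero_lt_one' ℝ)]
  rw [lintegral_union measurableSet_Ici (disjoint_left.2 fun s hs hs' => not_le_of_gt hs.2 hs')]
  have h2 : ∫⁻ s in Ici (1:ℝ), volume {x | s < gQ Q x} = 0 := by
    have hz : ∫⁻ s in Ici (1:ℝ), volume {x | s < gQ Q x}
        = ∫⁻ _ in Ici (1:ℝ), (0:ℝ≥0∞) := by
      refine setLIntegral_congr_fun measurableSet_Ici (fun s hs => ?_)
      have hempty : {x | s < gQ Q x} = ∅ := by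
        ext x
        simp only [mem_setOf_eq, mem_empty_iff_false, iff_false, not_lt]
        exact (gQ_le_one hQ hne x).trans hs
      rw [hempty, measure_empty]
    rw [hz, lintegral_zero]
  rw [h2, add_zero]
  have h3 : ∫⁻ s in Ioo (0:ℝ) 1, volume {x | s < gQ Q x}
      = ∫⁻ s in Ioo (0:ℝ) 1,
          ENNReal.ofReal ((-Real.log s) ^ n) * volume (nonnegOrth n \ copolar Q) := by
    refine setLIntegral_congr_fun measurableSet_Ioo (fun s hs => ?_)
    have hr : 0 < -Real.log s := by
      have := Real.log_neg hs.1 hs.2; linarith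
    have hset : {x | s < gQ Q x}
        = (-Real.log s) • {x | x ∈ nonnegOrth n ∧ -1 < supp Q x} := by
      rw [← scale_set hr]
      ext x
      simp only [mem_setOf_eq, gQ]
      split
      · next hx =>
        rw [← Real.log_lt_iff_lt_exp hs.1]
        constructor
        · intro h; exact ⟨hx, by linarith⟩
        · rintro ⟨_, h⟩; linarith
      · next hx =>
        constructor
        · intro h; exact absurd (lt_trans hs.1 h) (lt_irrefl 0)
        · rintro ⟨hx', _⟩; exact absurd hx' hx
    rw [hset, Measure.addHaar_smul, Module.finrank_fin_fun,
      abs_of_nonneg (pow_nonneg hr.le n), diff_copolar hQ hne]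
  rw [h3, lintegral_mul_const _ measurable_logpow]
  rfl

lemma bddAbove_smul_pairs {Q : Set (Fin n → ℝ)} (hQ : Q ⊆ negOrth n) {x : Fin n → ℝ}
    (hx : x ∈ nonnegOrth n) {c : ℝ} (hc : 0 ≤ c) :
    BddAbove (c • ((fun y => pairing x y) '' Q)) := by
  refine ⟨0, ?_⟩
  rintro z ⟨p, ⟨y, hy, rfl⟩, rfl⟩
  simp only [smul_eq_mul]
  exact mul_nonpos_iff.2 (Or.inl ⟨hc, pairing_nonpos hx (hQ hy)⟩)

lemma supp_minkComb {Q₀ Q₁ : Set (Fin n → ℝ)} (h₀ : Q₀ ⊆ negOrth n) (h₁ : Q₁ ⊆ negOrth n)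
    (h₀ne : Q₀.Nonempty) (h₁ne : Q₁.Nonempty) {x : Fin n → ℝ} (hx : x ∈ nonnegOrth n)
    {t : ℝ} (ht0 : 0 ≤ 1 - t) (ht1 : 0 ≤ t) :
    supp (minkComb t Q₀ Q₁) x = (1 - t) * supp Q₀ x + t * supp Q₁ x := by
  unfold supp
  have himg : (fun y => pairing x y) '' (minkComb t Q₀ Q₁)
      = ((1 - t) • ((fun y => pairing x y) '' Q₀)) + (t • ((fun y => pairing x y) '' Q₁)) := by
    ext z
    constructor
    · rintro ⟨y, ⟨a, ha, b, hb, rfl⟩, rfl⟩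
      show pairing x ((1 - t) • a + t • b) ∈ _
      rw [pairing_comb]
      exact Set.add_mem_add (Set.smul_mem_smul_set (mem_image_of_mem _ ha))
        (Set.smul_mem_smul_set (mem_image_of_mem _ hb))
    · rintro ⟨u, ⟨pa, ⟨a, ha, rfl⟩, rfl⟩, v, ⟨pb, ⟨b, hb, rfl⟩, rfl⟩, rfl⟩
      refine ⟨(1 - t) • a + t • b, ⟨a, ha, b, hb, rfl⟩, ?_⟩
      show pairing x ((1 - t) • a + t • b) = _
      rw [pairing_comb]
      simp [smul_eq_mul]
  rw [himg, csSup_add (h₀ne.image _).smul_set (bddAbove_smul_pairs h₀ hx ht0)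
    (h₁ne.image _).smul_set (bddAbove_smul_pairs h₁ hx ht1),
    Real.sSup_smul_of_nonneg ht0, Real.sSup_smul_of_nonneg ht1, smul_eq_mul, smul_eq_mul]

end CovolAux

open CovolAux

theorem covol_copolar_log_convex {n : ℕ} (Q₀ Q₁ : Set (Fin n → ℝ))
    (h₀ : Q₀ ⊆ negOrth n) (h₁ : Q₁ ⊆ negOrth n)
    (h₀ne : Q₀.Nonempty) (h₁ne : Q₁.Nonempty)
    (h₀c : Convex ℝ Q₀) (h₁c : Convex ℝ Q₁)
    (h₀compl : ∀ y ∈ Q₀, ∀ v ∈ nonposOrth n, y + v ∈ Q₀)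
    (h₁compl : ∀ y ∈ Q₁, ∀ v ∈ nonposOrth n, y + v ∈ Q₁)
    (hfin₀ : volume (nonnegOrth n \ copolar Q₀) < ⊤)
    (hfin₁ : volume (nonnegOrth n \ copolar Q₁) < ⊤)
    (t : ℝ) (ht : t ∈ Set.Ioo (0:ℝ) 1) :
    (volume (nonnegOrth n \ copolar (minkComb t Q₀ Q₁))).toReal ≤
      (volume (nonnegOrth n \ copolar Q₀)).toReal ^ (1 - t) *
      (volume (nonnegOrth n \ copolar Q₁)).toReal ^ t := by
  obtain ⟨ht0, ht1⟩ := ht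
  have h1t : 0 < 1 - t := by linarith
  set V₀ := volume (nonnegOrth n \ copolar Q₀) with hV₀
  set V₁ := volume (nonnegOrth n \ copolar Q₁) with hV₁
  set Vt := volume (nonnegOrth n \ copolar (minkComb t Q₀ Q₁)) with hVt
  have htQ : minkComb t Q₀ Q₁ ⊆ negOrth n := by
    rintro z ⟨a, ha, b, hb, rfl⟩ i
    have hai := h₀ ha i
    have hbi := h₁ hb i
    have : (1 - t) * a i < 0 := mul_neg_of_pos_of_neg h1t hai
    have : t * b i < 0 := mul_neg_of_pos_of_neg ht0 hbi
    simp only [Pi.add_apply, Pi.smul_apply, smul_eq_mul]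
    nlinarith [mul_neg_of_pos_of_neg h1t hai, mul_neg_of_pos_of_neg ht0 hbi]
  have htne : (minkComb t Q₀ Q₁).Nonempty :=
    ⟨(1 - t) • h₀ne.choose + t • h₁ne.choose,
      h₀ne.choose, h₀ne.choose_spec, h₁ne.choose, h₁ne.choose_spec, rfl⟩
  -- pointwise splitting of the integrand
  have hsplit : ∀ x, ENNReal.ofReal (gQ (minkComb t Q₀ Q₁) x)
      = (ENNReal.ofReal (gQ Q₀ x)) ^ (1 - t) * (ENNReal.ofReal (gQ Q₁ x)) ^ t := by
    intro x
    by_cases hx : x ∈ nonnegOrth n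
    · simp only [gQ, if_pos hx]
      rw [supp_minkComb h₀ h₁ h₀ne h₁ne hx h1t.le ht0.le, Real.exp_add,
        ENNReal.ofReal_mul (Real.exp_pos _).le]
      congr 1
      · rw [mul_comm (1 - t) (supp Q₀ x), Real.exp_mul,
          ENNReal.ofReal_rpow_of_pos (Real.exp_pos _)]
      · rw [mul_comm t (supp Q₁ x), Real.exp_mul,
          ENNReal.ofReal_rpow_of_pos (Real.exp_pos _)]
    · simp only [gQ, if_neg hx, ENNReal.ofReal_zero]
      rw [ENNReal.zero_rpow_of_pos h1t, ENNReal.zero_rpow_of_pos ht0, mul_zero]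
  -- Hölder's inequality
  have hpq : Real.HolderConjugate (1 - t)⁻¹ t⁻¹ := by
    rw [Real.holderConjugate_iff]
    constructor
    · rw [one_lt_inv_iff₀]
      exact ⟨h1t, by linarith⟩
    · rw [inv_inv, inv_inv]; ring
  have hf : AEMeasurable (fun x => (ENNReal.ofReal (gQ Q₀ x)) ^ (1 - t)) volume :=
    (((measurable_gQ h₀ h₀ne).ennreal_ofReal).pow_const (1 - t)).aemeasurable
  have hg : AEMeasurable (fun x => (ENNReal.ofReal (gQ Q₁ x)) ^ t) volume :=
    (((measurable_gQ h₁ h₁ne).ennreal_ofReal).pow_const t).aemeasurable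
  have holder := ENNReal.lintegral_mul_le_Lp_mul_Lq volume hpq hf hg
  simp only [Pi.mul_apply] at holder
  have heq1 : ∀ x, ((ENNReal.ofReal (gQ Q₀ x)) ^ (1 - t)) ^ (1 - t)⁻¹
      = ENNReal.ofReal (gQ Q₀ x) := by
    intro x
    rw [← ENNReal.rpow_mul, mul_inv_cancel₀ h1t.ne', ENNReal.rpow_one]
  have heq2 : ∀ x, ((ENNReal.ofReal (gQ Q₁ x)) ^ t) ^ t⁻¹ = ENNReal.ofReal (gQ Q₁ x) := by
    intro x
    rw [← ENNReal.rpow_mul, mul_inv_cancel₀ ht0.ne', ENNReal.rpow_one]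
  simp only [heq1, heq2, one_div, inv_inv] at holder
  have hmain : ∫⁻ x, ENNReal.ofReal (gQ (minkComb t Q₀ Q₁) x)
      ≤ (∫⁻ x, ENNReal.ofReal (gQ Q₀ x)) ^ (1 - t) * (∫⁻ x, ENNReal.ofReal (gQ Q₁ x)) ^ t := by
    calc ∫⁻ x, ENNReal.ofReal (gQ (minkComb t Q₀ Q₁) x)
        = ∫⁻ x, (ENNReal.ofReal (gQ Q₀ x)) ^ (1 - t) * (ENNReal.ofReal (gQ Q₁ x)) ^ t :=
          lintegral_congr hsplit
      _ ≤ _ := holder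
  rw [key htQ htne, key h₀ h₀ne, key h₁ h₁ne] at hmain
  rw [← hV₀, ← hV₁, ← hVt] at hmain
  have hc0 : c0 n * Vt ≤ c0 n * (V₀ ^ (1 - t) * V₁ ^ t) := by
    calc c0 n * Vt ≤ (c0 n * V₀) ^ (1 - t) * (c0 n * V₁) ^ t := hmain
      _ = (c0 n ^ (1 - t) * c0 n ^ t) * (V₀ ^ (1 - t) * V₁ ^ t) := by
          rw [ENNReal.mul_rpow_of_nonneg _ _ h1t.le, ENNReal.mul_rpow_of_nonneg _ _ ht0.le]
          ring
      _ = c0 n * (V₀ ^ (1 - t) * V₁ ^ t) := by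
          rw [← ENNReal.rpow_add _ _ (c0_pos (n := n)).ne' (c0_lt_top (n := n)).ne]
          norm_num
  have hVle : Vt ≤ V₀ ^ (1 - t) * V₁ ^ t :=
    (ENNReal.mul_le_mul_iff_right (c0_pos (n := n)).ne' (c0_lt_top (n := n)).ne).1 hc0
  have hRne : V₀ ^ (1 - t) * V₁ ^ t ≠ ⊤ :=
    ENNReal.mul_ne_top (ENNReal.rpow_ne_top_of_nonneg h1t.le hfin₀.ne)
      (ENNReal.rpow_ne_top_of_nonneg ht0.le hfin₁.ne)
  have := ENNReal.toReal_mono hRne hVle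
  rwa [ENNReal.toReal_mul, ← ENNReal.toReal_rpow, ← ENNReal.toReal_rpow] at this
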